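/- The Hermite polynomials decompose into the functions ξ_n: H_n(x) = i^n 2^{n−1} n! ((−1)^n ξ_n(−ix) + ξ_n(ix)), where ξ_n(x) = Σ_{m=0}^{n} (−x)^m / (2^{n−m} m! Γ(1 + (n−m)/2)) + Σ_{j=0}^{∞} (−x)^{n+2j+1} 2^{2j+1} / ((n+2j+1)! Γ(1/2 − j)). -/

import Mathlib

open Polynomial Complex

/-- The physicists' Hermite polynomials, via `H_{n+1} = 2x H_n - H_n'`. -/
noncomputable def physHermite : ℕ → Polynomial ℝ
  | 0 => 1
  | n + 1 => C 2 * X * physHermite n - derivative (physHermite n)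

/-- The entire functions
`ξ_n(z) = Σ_{m=0}^{n} (-z)^m / (2^{n-m} m! Γ(1+(n-m)/2))
        + Σ_{j≥0} (-z)^{n+2j+1} 2^{2j+1} / ((n+2j+1)! Γ(1/2-j))`. -/
noncomputable def ξ (n : ℕ) (z : ℂ) : ℂ :=
  (∑ m ∈ Finset.range (n + 1),
      (-z) ^ m / (2 ^ (n - m) * (Nat.factorial m) * Complex.Gamma (1 + ((n : ℂ) - m) / 2)))
    + ∑' j : ℕ,
      (-z) ^ (n + 2 * j + 1) * 2 ^ (2 * j + 1) /
        ((Nat.factorial (n + 2 * j + 1)) * Complex.Gamma (1 / 2 - (j : ℂ)))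


lemma physHermite_succ (n : ℕ) :
    physHermite (n+1) = C 2 * X * physHermite n - derivative (physHermite n) := rfl

lemma coeff_physHermite_succ_zero (n : ℕ) :
    coeff (physHermite (n+1)) 0 = -coeff (physHermite n) 1 := by
  simp [physHermite_succ, coeff_derivative]

lemma coeff_physHermite_succ_succ (n k : ℕ) :
    coeff (physHermite (n+1)) (k+1) =
      2 * coeff (physHermite n) k - ((k:ℝ)+2) * coeff (physHermite n) (k+2) := by
  rw [physHermite_succ, coeff_sub, mul_assoc, coeff_C_mul, coeff_X_mul, coeff_derivative]
  push_cast
  ring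

lemma natDegree_physHermite_le (n : ℕ) : (physHermite n).natDegree ≤ n := by
  induction n with
  | zero => simp [physHermite]
  | succ n ih =>
    rw [physHermite_succ]
    refine (natDegree_sub_le _ _).trans (max_le ?_ ?_)
    · refine (natDegree_mul_le).trans ?_
      have h1 : (C (2:ℝ) * X).natDegree ≤ 1 :=
        (natDegree_mul_le).trans (by simp)
      omega
    · exact (natDegree_derivative_le _).trans (by omega)

lemma coeff_physHermite_of_lt {n k : ℕ} (h : n < k) : coeff (physHermite n) k = 0 :=
  coeff_eq_zero_of_natDegree_lt (lt_of_le_of_lt (natDegree_physHermite_le n) h)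

lemma coeff_physHermite_self (k : ℕ) : coeff (physHermite k) k = 2 ^ k := by
  induction k with
  | zero => simp [physHermite]
  | succ k ih =>
    rw [coeff_physHermite_succ_succ, ih, coeff_physHermite_of_lt (by omega)]
    ring

lemma coeff_physHermite_of_odd_add : ∀ {n k : ℕ}, Odd (n + k) → coeff (physHermite n) k = 0 := by
  intro n
  induction n with
  | zero =>
    intro k hk
    rw [zero_add] at hk
    exact coeff_physHermite_of_lt hk.pos
  | succ n ih =>
    intro k hk
    cases k with
    | zero =>
      rw [coeff_physHermite_succ_zero, ih (by rw [Nat.odd_iff] at hk ⊢; omega), neg_zero]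
    | succ k =>
      rw [coeff_physHermite_succ_succ, ih (by rw [Nat.odd_iff] at hk ⊢; omega),
        ih (by rw [Nat.odd_iff] at hk ⊢; omega)]
      ring

lemma coeff_physHermite_explicit :
    ∀ n k : ℕ, coeff (physHermite (2 * n + k)) k =
      (-1 : ℝ) ^ n * (Nat.factorial (2 * n + k)) /
        ((Nat.factorial n) * (Nat.factorial k)) * 2 ^ k
  | 0, k => by
    simp [coeff_physHermite_self k, Nat.factorial_ne_zero]
  | n + 1, 0 => by
    rw [show 2 * (n + 1) + 0 = (2 * n + 1) + 1 by ring, coeff_physHermite_succ_zero,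
      show 2 * n + 1 = 2 * n + 1 from rfl, coeff_physHermite_explicit n 1]
    have h1 : ((2 * n + 1) + 1).factorial = ((2 * n + 1) + 1) * (2 * n + 1).factorial :=
      Nat.factorial_succ _
    have h2 : (n + 1).factorial = (n + 1) * n.factorial := Nat.factorial_succ _
    have e1 : ((2 * n + 1).factorial : ℝ) ≠ 0 := by positivity
    have e2 : ((n).factorial : ℝ) ≠ 0 := by positivity
    rw [h1, h2]
    push_cast
    field_simp
    ring
  | n + 1, k + 1 => by
    rw [show 2 * (n + 1) + (k + 1) = (2 * (n + 1) + k) + 1 by ring,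
      coeff_physHermite_succ_succ, coeff_physHermite_explicit (n + 1) k,
      show 2 * (n + 1) + k = 2 * n + (k + 2) by ring, coeff_physHermite_explicit n (k + 2)]
    have h1 : (2 * n + (k + 2) + 1).factorial = (2 * n + k + 3) * (2 * n + (k + 2)).factorial := by
      rw [Nat.factorial_succ]; congr 1
    have h2 : (n + 1).factorial = (n + 1) * n.factorial := Nat.factorial_succ _
    have h3 : (k + 2).factorial = (k + 2) * (k + 1) * k.factorial := by
      rw [Nat.factorial_succ, Nat.factorial_succ]; ring
    have h4 : (k + 1).factorial = (k + 1) * k.factorial := Nat.factorial_succ _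
    have e1 : ((2 * n + (k + 2)).factorial : ℝ) ≠ 0 := by positivity
    have e2 : ((n).factorial : ℝ) ≠ 0 := by positivity
    have e3 : ((k).factorial : ℝ) ≠ 0 := by positivity
    rw [h1, h2, h3, h4]
    push_cast
    field_simp
    ring
  termination_by n k => (n, k)

lemma tail_cancel (n : ℕ) (z : ℂ) :
    (-1 : ℂ) ^ n * (∑' j : ℕ, (-(-z)) ^ (n + 2 * j + 1) * 2 ^ (2 * j + 1) /
        ((Nat.factorial (n + 2 * j + 1)) * Complex.Gamma (1 / 2 - (j : ℂ))))
      + ∑' j : ℕ, (-z) ^ (n + 2 * j + 1) * 2 ^ (2 * j + 1) /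
        ((Nat.factorial (n + 2 * j + 1)) * Complex.Gamma (1 / 2 - (j : ℂ))) = 0 := by
  rw [← tsum_mul_left]
  have h : ∀ j : ℕ, (-1 : ℂ) ^ n * ((-(-z)) ^ (n + 2 * j + 1) * 2 ^ (2 * j + 1) /
        ((Nat.factorial (n + 2 * j + 1)) * Complex.Gamma (1 / 2 - (j : ℂ))))
      = -((-z) ^ (n + 2 * j + 1) * 2 ^ (2 * j + 1) /
        ((Nat.factorial (n + 2 * j + 1)) * Complex.Gamma (1 / 2 - (j : ℂ)))) := by
    intro j
    rw [neg_neg, show ((-z) ^ (n + 2 * j + 1)) = (-1:ℂ)^(n + 2*j+1) * z^(n+2*j+1) by rw [neg_pow],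
      show ((-1:ℂ))^(n + 2*j+1) = -(-1:ℂ)^n by rw [pow_add, pow_add, pow_mul]; simp]
    ring
  rw [tsum_congr h, tsum_neg]
  ring

/-- `H_n(x) = i^n 2^{n-1} n! ((-1)^n ξ_n(-ix) + ξ_n(ix))` for all real `x`. -/
theorem hermite_xi_decomposition (n : ℕ) (x : ℝ) :
    Polynomial.aeval (x : ℂ) (physHermite n) =
      Complex.I ^ n * (2 : ℂ) ^ ((n : ℤ) - 1) * (Nat.factorial n) *
        ((-1) ^ n * ξ n (-(Complex.I * x)) + ξ n (Complex.I * x)) := by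
  rw [Polynomial.aeval_eq_sum_range' (Nat.lt_succ_of_le (natDegree_physHermite_le n))]
  unfold ξ
  rw [mul_add ((-1:ℂ)^n), add_add_add_comm, tail_cancel n (Complex.I * x), add_zero,
    Finset.mul_sum, ← Finset.sum_add_distrib, Finset.mul_sum]
  refine Finset.sum_congr rfl ?_
  intro m hm
  simp only [neg_neg]
  rcases Nat.even_or_odd (n + m) with he | ho
  · -- even case
    have hmn : m ≤ n := Nat.lt_succ_iff.mp (Finset.mem_range.mp hm)
    obtain ⟨j, hj⟩ : ∃ j, n = 2 * j + m := by
      rcases he with ⟨t, ht⟩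
      exact ⟨t - m, by omega⟩
    subst hj
    rw [coeff_physHermite_explicit j m]
    have hΓ : Complex.Gamma (1 + ((↑(2*j+m) : ℂ) - ↑m)/2) = (j.factorial : ℂ) := by
      rw [show (1 : ℂ) + ((↑(2*j+m):ℂ) - ↑m)/2 = (j:ℂ) + 1 by push_cast; ring,
        Complex.Gamma_nat_eq_factorial]
    rw [hΓ, show 2*j+m-m = 2*j by omega]
    have h2p : (2:ℂ)^((↑(2*j+m):ℤ) - 1) = 2^(2*j+m) / 2 := by
      rw [zpow_sub₀ (two_ne_zero), zpow_one, zpow_natCast]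
    rw [h2p, show ((-1:ℂ))^(2*j+m) = (-1:ℂ)^m by rw [pow_add, pow_mul]; simp,
      show Complex.I^(2*j+m) = (-1:ℂ)^j * Complex.I^m by rw [pow_add, pow_mul, Complex.I_sq],
      show (-(Complex.I*(x:ℂ)))^m = (-1:ℂ)^m * (Complex.I*x)^m by rw [neg_pow],
      mul_pow Complex.I (x:ℂ)]
    have huu : (Complex.I^m)^2 = (-1:ℂ)^m := by
      rw [sq, ← mul_pow, Complex.I_mul_I]
    have hBB : ((-1:ℂ)^m)^2 = 1 := by
      rw [sq, ← mul_pow]; norm_num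
    have e1 : ((2*j+m).factorial : ℂ) ≠ 0 := by
      exact_mod_cast Nat.cast_ne_zero.mpr (Nat.factorial_ne_zero _)
    have e2 : ((j).factorial : ℂ) ≠ 0 := by
      exact_mod_cast Nat.cast_ne_zero.mpr (Nat.factorial_ne_zero _)
    have e3 : ((m).factorial : ℂ) ≠ 0 := by
      exact_mod_cast Nat.cast_ne_zero.mpr (Nat.factorial_ne_zero _)
    rw [Complex.real_smul]
    push_cast
    field_simp
    ring_nf
    rw [show Complex.I^(m*2) = (-1:ℂ)^m by rw [mul_comm, pow_mul, Complex.I_sq]]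
    linear_combination (-(x:ℂ)^m * 2^m * 2^(j*2) * 2) * hBB
  · -- odd case
    rw [coeff_physHermite_of_odd_add ho, zero_smul]
    rw [show (-(Complex.I*(x:ℂ)))^m = (-1:ℂ)^m * (Complex.I*x)^m by rw [neg_pow],
      show ((-1:ℂ))^n = -(-1:ℂ)^m by
        have h1 : ((-1:ℂ))^(n+m) = -1 := Odd.neg_one_pow ho
        have h2 : ((-1:ℂ))^m * (-1:ℂ)^m = 1 := by rw [← mul_pow]; norm_num
        rw [pow_add] at h1
        calc ((-1:ℂ))^n = ((-1:ℂ))^n * (((-1:ℂ))^m * (-1:ℂ)^m) := by rw [h2, mul_one]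
          _ = (((-1:ℂ))^n * (-1:ℂ)^m) * (-1:ℂ)^m := by ring
          _ = -(-1:ℂ)^m := by rw [h1]; ring]
    ring
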